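/- Multi-parameter Cramér-Rao bound: for an unbiased estimator θ̂ of a vector parameter θ ∈ ℝ^d of a finite probability distribution, the covariance matrix satisfies Cov(θ̂) ⪰ C(θ)⁻¹ in the Loewner order, where C(θ) is the (assumed invertible) Fisher information matrix. -/

import Mathlib

open Matrix

/-- Multi-parameter Cramér-Rao bound: for an unbiased estimator of
`θ ∈ ℝ^d`, the covariance matrix dominates the inverse of the (invertible)
Fisher information matrix in the Loewner order. -/
theorem multiparameter_cramer_rao_bound
    {X : Type*} [Fintype X] {d : ℕ}
    (p : X → (Fin d → ℝ) → ℝ) (p' : X → Fin d → ℝ) (θ : Fin d → ℝ)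
    (est : X → Fin d → ℝ)
    (C Cov : Matrix (Fin d) (Fin d) ℝ)
    (hpos : ∀ x, 0 < p x θ)
    (hsum : ∀ t, ∑ x, p x t = 1)
    (hderiv : ∀ x i, HasDerivAt (fun s : ℝ => p x (Function.update θ i s)) (p' x i) (θ i))
    (hunbiased : ∀ i, ∑ x, p x θ * est x i = θ i)
    (hunbiased' : ∀ i j, ∑ x, p' x i * est x j = if i = j then (1:ℝ) else 0)
    (hC : ∀ i j, C i j = ∑ x, p x θ * (p' x i / p x θ) * (p' x j / p x θ))
    (hCinv : IsUnit C)
    (hCov : ∀ i j, Cov i j = ∑ x, p x θ * (est x i - θ i) * (est x j - θ j)) :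
    (Cov - C⁻¹).PosSemidef := by
  have hp0 : ∀ x, p x θ ≠ 0 := fun x => (hpos x).ne'
  have hdet : IsUnit C.det := (Matrix.isUnit_iff_isUnit_det C).mp hCinv
  have hsum' : ∀ i, ∑ x, p' x i = 0 := by
    intro i
    have h1 : HasDerivAt (fun s : ℝ => ∑ x, p x (Function.update θ i s)) (∑ x, p' x i) (θ i) :=
      HasDerivAt.fun_sum (fun x _ => hderiv x i)
    have h2 : (fun s : ℝ => ∑ x, p x (Function.update θ i s)) = fun _ => (1:ℝ) := by
      funext s; exact hsum _
    rw [h2] at h1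
    exact h1.unique (hasDerivAt_const _ _)
  have hcross : ∀ i j, ∑ x, p x θ * (est x i - θ i) * (p' x j / p x θ)
      = if j = i then 1 else 0 := by
    intro i j
    have e : ∀ x : X, p x θ * (est x i - θ i) * (p' x j / p x θ)
        = p' x j * est x i - θ i * p' x j := by
      intro x; field_simp [hp0 x]
    rw [Finset.sum_congr rfl fun x _ => e x, Finset.sum_sub_distrib, ← Finset.mul_sum,
      hsum' j, hunbiased' j i]
    simp
  have hCsymm : C.IsHermitian := by
    show Cᴴ = C
    ext i j
    simp only [Matrix.conjTranspose_apply, star_trivial, hC]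
    exact Finset.sum_congr rfl fun x _ => by ring
  have hCovsymm : Cov.IsHermitian := by
    show Covᴴ = Cov
    ext i j
    simp only [Matrix.conjTranspose_apply, star_trivial, hCov]
    exact Finset.sum_congr rfl fun x _ => by ring
  rw [Matrix.posSemidef_iff_dotProduct_mulVec]
  constructor
  · exact hCovsymm.sub hCsymm.inv
  intro v
  set w : Fin d → ℝ := C⁻¹ *ᵥ v with hw
  have expand : ∀ (u w' : Fin d → ℝ) (f g : X → Fin d → ℝ),
      ∑ x, p x θ * ((∑ i, u i * f x i) * (∑ j, w' j * g x j))
        = ∑ i, ∑ j, u i * w' j * ∑ x, p x θ * f x i * g x j := by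
    intro u w' f g
    have hx : ∀ x : X, p x θ * ((∑ i, u i * f x i) * (∑ j, w' j * g x j))
        = ∑ i, ∑ j, u i * w' j * (p x θ * f x i * g x j) := by
      intro x
      rw [Finset.sum_mul_sum, Finset.mul_sum]
      refine Finset.sum_congr rfl fun i _ => ?_
      rw [Finset.mul_sum]
      exact Finset.sum_congr rfl fun j _ => by ring
    rw [Finset.sum_congr rfl fun x _ => hx x, Finset.sum_comm]
    refine Finset.sum_congr rfl fun i _ => ?_
    rw [Finset.sum_comm]
    refine Finset.sum_congr rfl fun j _ => ?_
    rw [← Finset.mul_sum]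
  have keyA : ∑ x, p x θ * ((∑ i, v i * (est x i - θ i)) * (∑ j, v j * (est x j - θ j)))
      = v ⬝ᵥ Cov *ᵥ v := by
    rw [expand]
    simp only [dotProduct, Matrix.mulVec, hCov]
    refine Finset.sum_congr rfl fun i _ => ?_
    rw [Finset.mul_sum]
    exact Finset.sum_congr rfl fun j _ => by ring
  have keyB : ∑ x, p x θ * ((∑ i, v i * (est x i - θ i)) * (∑ j, w j * (p' x j / p x θ)))
      = v ⬝ᵥ w := by
    rw [expand]
    simp only [dotProduct]
    refine Finset.sum_congr rfl fun i _ => ?_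
    rw [Finset.sum_congr rfl fun j (_ : j ∈ Finset.univ) => by rw [hcross i j]]
    simp [Finset.mul_sum, mul_ite]
  have keyD : ∑ x, p x θ * ((∑ i, w i * (p' x i / p x θ)) * (∑ j, w j * (p' x j / p x θ)))
      = w ⬝ᵥ C *ᵥ w := by
    rw [expand]
    simp only [dotProduct, Matrix.mulVec, hC]
    refine Finset.sum_congr rfl fun i _ => ?_
    rw [Finset.mul_sum]
    exact Finset.sum_congr rfl fun j _ => by ring
  have hCw : C *ᵥ w = v := by
    rw [hw, Matrix.mulVec_mulVec, Matrix.mul_nonsing_inv C hdet, Matrix.one_mulVec]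
  have hDB : w ⬝ᵥ C *ᵥ w = v ⬝ᵥ w := by rw [hCw, dotProduct_comm]
  have hnn : 0 ≤ ∑ x, p x θ *
      ((∑ i, v i * (est x i - θ i)) - (∑ i, w i * (p' x i / p x θ)))^2 :=
    Finset.sum_nonneg fun x _ => mul_nonneg (hpos x).le (sq_nonneg _)
  have hexp : ∑ x, p x θ *
      ((∑ i, v i * (est x i - θ i)) - (∑ i, w i * (p' x i / p x θ)))^2
      = v ⬝ᵥ Cov *ᵥ v - 2 * (v ⬝ᵥ w) + w ⬝ᵥ C *ᵥ w := by
    rw [← keyA, ← keyB, ← keyD, Finset.mul_sum]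
    rw [← Finset.sum_sub_distrib, ← Finset.sum_add_distrib]
    exact Finset.sum_congr rfl fun x _ => by ring
  rw [hexp, hDB] at hnn
  have goal_eq : star v ⬝ᵥ (Cov - C⁻¹) *ᵥ v = v ⬝ᵥ Cov *ᵥ v - v ⬝ᵥ w := by
    rw [star_trivial, Matrix.sub_mulVec, dotProduct_sub, hw]
  rw [goal_eq]
  linarith
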